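/- (Minimax theorem for partial monitoring.) For any finite-action partial monitoring game (any integer k ≥ 1, any outcome set X, any signal set Σ, any loss function L : [k] × X → [0,1] and any signal function Φ : [k] × X → Σ) and any horizon n ≥ 1, the minimax regret equals the worst-case Bayesian regret over finitely supported priors: inf_{π} sup_{x ∈ X^n} R_n(π,x) = sup_{ν finitely supported probability measure on X^n} inf_{π} BR_n(π,ν), and for each such ν the inner infimum over policies is attained. -/

import Mathlib

open scoped BigOperators

noncomputable section

/-- The history of action/signal pairs observed before round `t` when policy play
produced actions `a` against outcome sequence `x`. -/
def history {k n : ℕ} {X S : Type*} (Φ : Fin k → X → S) (x : Fin n → X)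
    (a : Fin n → Fin k) (t : Fin n) : List (Fin k × S) :=
  ((List.finRange n).take t.1).map fun s => (a s, Φ (a s) (x s))

/-- The probability that policy `π` plays the action sequence `a` against outcomes `x`. -/
def playProb {k n : ℕ} {X S : Type*} (Φ : Fin k → X → S)
    (π : List (Fin k × S) → Fin k → ℝ) (x : Fin n → X) (a : Fin n → Fin k) : ℝ :=
  ∏ t : Fin n, π (history Φ x a t) (a t)

/-- The expected regret of policy `π` against the outcome sequence `x`. -/
def regret {k n : ℕ} {X S : Type*} (L : Fin k → X → ℝ) (Φ : Fin k → X → S)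
    (π : List (Fin k × S) → Fin k → ℝ) (x : Fin n → X) : ℝ :=
  ⨆ astar : Fin k, ∑ a : Fin n → Fin k,
    playProb Φ π x a * ∑ t : Fin n, (L (a t) (x t) - L astar (x t))

/-- A policy assigns to every history a probability vector over the `k` actions. -/
def IsPolicy {k : ℕ} {S : Type*} (π : List (Fin k × S) → Fin k → ℝ) : Prop :=
  ∀ h, π h ∈ stdSimplex ℝ (Fin k)

/-- The minimax regret of a finite-action partial monitoring game. -/
def minimaxRegret (k n : ℕ) {X S : Type*} (L : Fin k → X → ℝ) (Φ : Fin k → X → S) : ℝ :=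
  ⨅ π : {π : List (Fin k × S) → Fin k → ℝ // IsPolicy π},
    ⨆ x : Fin n → X, regret L Φ π.1 x

/-- A finitely supported prior on outcome sequences: a finitely supported nonnegative
function summing to one. -/
def IsPrior {n : ℕ} {X : Type*} (ν : (Fin n → X) →₀ ℝ) : Prop :=
  (∀ x, 0 ≤ ν x) ∧ ν.sum (fun _ p => p) = 1

/-- The Bayesian regret of a policy `π` with respect to a finitely supported prior `ν`. -/
def bayesRegret {k n : ℕ} {X S : Type*} (L : Fin k → X → ℝ) (Φ : Fin k → X → S)
    (π : List (Fin k × S) → Fin k → ℝ) (ν : (Fin n → X) →₀ ℝ) : ℝ :=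
  ν.sum fun x p => p * regret L Φ π x

section Aux
variable {k n : ℕ} {X S : Type*}

def gstep (Φ : Fin k → X → S) (π : List (Fin k × S) → Fin k → ℝ) (x : Fin n → X)
    (a : Fin n → Fin k) (i : ℕ) : ℝ :=
  if h : i < n then π (history Φ x a ⟨i, h⟩) (a ⟨i, h⟩) else 1

lemma playProb_eq_prod_range (Φ : Fin k → X → S) (π : List (Fin k × S) → Fin k → ℝ)
    (x : Fin n → X) (a : Fin n → Fin k) :
    playProb Φ π x a = ∏ i ∈ Finset.range n, gstep Φ π x a i := by
  rw [playProb, ← Fin.prod_univ_eq_prod_range (gstep Φ π x a) n]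
  refine Finset.prod_congr rfl fun t _ => ?_
  simp [gstep, t.isLt]

lemma history_mk_zero (Φ : Fin k → X → S) (x : Fin n → X) (a : Fin n → Fin k) (h0 : 0 < n) :
    history Φ x a ⟨0, h0⟩ = [] := by simp [history]

lemma history_succ (Φ : Fin k → X → S) (x : Fin n → X) (a : Fin n → Fin k) (i : ℕ)
    (hi : i + 1 < n) (hi' : i < n) :
    history Φ x a ⟨i + 1, hi⟩ =
      history Φ x a ⟨i, hi'⟩ ++ [(a ⟨i, hi'⟩, Φ (a ⟨i, hi'⟩) (x ⟨i, hi'⟩))] := by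
  unfold history
  rw [List.take_succ, List.map_append]
  congr 1
  have hlen : i < (List.finRange n).length := by simpa using hi'
  rw [List.getElem?_eq_getElem hlen]
  simp

def wgtAux (π : List (Fin k × S) → Fin k → ℝ) : List (Fin k × S) → ℝ
  | [] => 1
  | e :: r => wgtAux π r * π r.reverse e.1

def wgt (π : List (Fin k × S) → Fin k → ℝ) (h : List (Fin k × S)) : ℝ :=
  wgtAux π h.reverse

@[simp] lemma wgt_nil (π : List (Fin k × S) → Fin k → ℝ) : wgt π [] = 1 := rfl

lemma wgt_append (π : List (Fin k × S) → Fin k → ℝ) (h : List (Fin k × S)) (e : Fin k × S) :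
    wgt π (h ++ [e]) = wgt π h * π h e.1 := by
  simp [wgt, wgtAux, List.reverse_append]

lemma wgt_history (Φ : Fin k → X → S) (π : List (Fin k × S) → Fin k → ℝ)
    (x : Fin n → X) (a : Fin n → Fin k) :
    ∀ (i : ℕ) (hi : i < n),
      wgt π (history Φ x a ⟨i, hi⟩) = ∏ j ∈ Finset.range i, gstep Φ π x a j := by
  intro i
  induction i with
  | zero => intro hi; rw [history_mk_zero, wgt_nil, Finset.prod_range_zero]
  | succ i ih =>
    intro hi
    have hi' : i < n := Nat.lt_of_succ_lt hi
    rw [history_succ Φ x a i hi hi', wgt_append, ih hi', Finset.prod_range_succ]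
    congr 1
    rw [gstep, dif_pos hi']

/-- Kuhn-style mixture of two policies. -/
def mixPol (hk : 1 ≤ k) (π0 π1 : List (Fin k × S) → Fin k → ℝ) (lam : ℝ) :
    List (Fin k × S) → Fin k → ℝ :=
  fun h j =>
    if lam * wgt π0 h + (1 - lam) * wgt π1 h = 0 then (k : ℝ)⁻¹
    else (lam * wgt π0 h * π0 h j + (1 - lam) * wgt π1 h * π1 h j) /
      (lam * wgt π0 h + (1 - lam) * wgt π1 h)

lemma wgt_nonneg {π : List (Fin k × S) → Fin k → ℝ} (hπ : IsPolicy π) (h : List (Fin k × S)) :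
    0 ≤ wgt π h := by
  rw [wgt]
  generalize h.reverse = l
  induction l with
  | nil => exact zero_le_one
  | cons e r ih => exact mul_nonneg ih ((hπ r.reverse).1 e.1)

lemma isPolicy_mixPol (hk : 1 ≤ k) {π0 π1 : List (Fin k × S) → Fin k → ℝ}
    (h0 : IsPolicy π0) (h1 : IsPolicy π1) {lam : ℝ} (hlam : lam ∈ Set.Icc (0:ℝ) 1) :
    IsPolicy (mixPol hk π0 π1 lam) := by
  intro h
  have hknz : (k : ℝ) ≠ 0 := Nat.cast_ne_zero.mpr (by omega)
  have hw0 := wgt_nonneg h0 h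
  have hw1 := wgt_nonneg h1 h
  have hd0 : 0 ≤ lam * wgt π0 h := mul_nonneg hlam.1 hw0
  have hd1 : 0 ≤ (1 - lam) * wgt π1 h := mul_nonneg (by linarith [hlam.2]) hw1
  by_cases hd : lam * wgt π0 h + (1 - lam) * wgt π1 h = 0
  · constructor
    · intro j; simp only [mixPol, if_pos hd]
      positivity
    · simp only [mixPol, if_pos hd]
      rw [Finset.sum_const, Finset.card_univ, Fintype.card_fin, nsmul_eq_mul,
        mul_inv_cancel₀ hknz]
  · constructor
    · intro j; simp only [mixPol, if_neg hd]
      have := (h0 h).1 j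
      have := (h1 h).1 j
      have hdpos : 0 < lam * wgt π0 h + (1 - lam) * wgt π1 h :=
        lt_of_le_of_ne (by linarith) (Ne.symm hd)
      positivity
    · simp only [mixPol, if_neg hd]
      rw [← Finset.sum_div]
      rw [div_eq_one_iff_eq hd]
      rw [Finset.sum_add_distrib, ← Finset.mul_sum, ← Finset.mul_sum, (h0 h).2, (h1 h).2,
        mul_one, mul_one]

lemma playProb_mixPol (hk : 1 ≤ k) (Φ : Fin k → X → S)
    {π0 π1 : List (Fin k × S) → Fin k → ℝ}
    (h0 : IsPolicy π0) (h1 : IsPolicy π1) {lam : ℝ} (hlam : lam ∈ Set.Icc (0:ℝ) 1)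
    (x : Fin n → X) (a : Fin n → Fin k) :
    playProb Φ (mixPol hk π0 π1 lam) x a =
      lam * playProb Φ π0 x a + (1 - lam) * playProb Φ π1 x a := by
  have key : ∀ m : ℕ, m ≤ n →
      ∏ i ∈ Finset.range m, gstep Φ (mixPol hk π0 π1 lam) x a i =
        lam * ∏ i ∈ Finset.range m, gstep Φ π0 x a i +
        (1 - lam) * ∏ i ∈ Finset.range m, gstep Φ π1 x a i := by
    intro m
    induction m with
    | zero => intro _; simp
    | succ m ih =>
      intro hm
      have hm' : m < n := hm
      have hmn : m ≤ n := le_of_lt hm'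
      set W0 := ∏ i ∈ Finset.range m, gstep Φ π0 x a i with hW0
      set W1 := ∏ i ∈ Finset.range m, gstep Φ π1 x a i with hW1
      have hw0 : wgt π0 (history Φ x a ⟨m, hm'⟩) = W0 := wgt_history Φ π0 x a m hm'
      have hw1 : wgt π1 (history Φ x a ⟨m, hm'⟩) = W1 := wgt_history Φ π1 x a m hm'
      rw [Finset.prod_range_succ, Finset.prod_range_succ, Finset.prod_range_succ, ih hmn]
      have hg : ∀ (π : List (Fin k × S) → Fin k → ℝ),
          gstep Φ π x a m = π (history Φ x a ⟨m, hm'⟩) (a ⟨m, hm'⟩) := by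
        intro π; rw [gstep, dif_pos hm']
      rw [hg, hg, hg]
      set h := history Φ x a ⟨m, hm'⟩
      set j := a ⟨m, hm'⟩
      by_cases hd : lam * wgt π0 h + (1 - lam) * wgt π1 h = 0
      · have hW0nn : 0 ≤ W0 := by
          rw [← hw0]; exact wgt_nonneg h0 h
        have hW1nn : 0 ≤ W1 := by
          rw [← hw1]; exact wgt_nonneg h1 h
        have h00 : lam * W0 = 0 ∧ (1 - lam) * W1 = 0 := by
          rw [hw0, hw1] at hd
          constructor <;> nlinarith [mul_nonneg hlam.1 hW0nn,
            mul_nonneg (by linarith [hlam.2] : (0:ℝ) ≤ 1 - lam) hW1nn]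
        rw [hw0, hw1] at hd
        rw [hd, zero_mul]
        linear_combination (-(π0 h j)) * h00.1 - (π1 h j) * h00.2
      · rw [hw0, hw1] at hd
        simp only [mixPol, hw0, hw1]
        rw [if_neg hd]
        field_simp
        ring
  rw [playProb_eq_prod_range, playProb_eq_prod_range, playProb_eq_prod_range]
  exact key n le_rfl

end Aux

section More
variable {k n : ℕ} {X S : Type*}

lemma stdSimplex_le_one {f : Fin k → ℝ} (hf : f ∈ stdSimplex ℝ (Fin k)) (j : Fin k) :
    f j ≤ 1 := by
  rw [← hf.2]
  exact Finset.single_le_sum (fun i _ => hf.1 i) (Finset.mem_univ j)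

lemma playProb_nonneg {π : List (Fin k × S) → Fin k → ℝ} (hπ : IsPolicy π)
    (Φ : Fin k → X → S) (x : Fin n → X) (a : Fin n → Fin k) : 0 ≤ playProb Φ π x a :=
  Finset.prod_nonneg fun t _ => (hπ _).1 _

lemma playProb_le_one {π : List (Fin k × S) → Fin k → ℝ} (hπ : IsPolicy π)
    (Φ : Fin k → X → S) (x : Fin n → X) (a : Fin n → Fin k) : playProb Φ π x a ≤ 1 :=
  Finset.prod_le_one (fun t _ => (hπ _).1 _) (fun t _ => stdSimplex_le_one (hπ _) _)

lemma inner_sum_bound {L : Fin k → X → ℝ} (hL : ∀ a x, L a x ∈ Set.Icc (0:ℝ) 1)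
    (x : Fin n → X) (a : Fin n → Fin k) (astar : Fin k) :
    |∑ t : Fin n, (L (a t) (x t) - L astar (x t))| ≤ (n : ℝ) := by
  calc |∑ t : Fin n, (L (a t) (x t) - L astar (x t))|
      ≤ ∑ t : Fin n, |L (a t) (x t) - L astar (x t)| := Finset.abs_sum_le_sum_abs _ _
    _ ≤ ∑ _t : Fin n, (1:ℝ) := by
        refine Finset.sum_le_sum fun t _ => ?_
        have h1 := hL (a t) (x t)
        have h2 := hL astar (x t)
        rw [abs_le]
        constructor <;> [linarith [h1.1, h2.2]; linarith [h1.2, h2.1]]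
    _ = (n : ℝ) := by simp

lemma payoff_abs_bound {L : Fin k → X → ℝ} (hL : ∀ a x, L a x ∈ Set.Icc (0:ℝ) 1)
    {π : List (Fin k × S) → Fin k → ℝ} (hπ : IsPolicy π) (Φ : Fin k → X → S)
    (x : Fin n → X) (astar : Fin k) :
    |∑ a : Fin n → Fin k, playProb Φ π x a * ∑ t : Fin n, (L (a t) (x t) - L astar (x t))|
      ≤ (n : ℝ) * (k : ℝ) ^ n := by
  calc |∑ a : Fin n → Fin k, playProb Φ π x a * ∑ t : Fin n, (L (a t) (x t) - L astar (x t))|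
      ≤ ∑ a : Fin n → Fin k,
          |playProb Φ π x a * ∑ t : Fin n, (L (a t) (x t) - L astar (x t))| :=
        Finset.abs_sum_le_sum_abs _ _
    _ ≤ ∑ _a : Fin n → Fin k, (n : ℝ) := by
        refine Finset.sum_le_sum fun a _ => ?_
        rw [abs_mul]
        have h1 : |playProb Φ π x a| ≤ 1 := by
          rw [abs_of_nonneg (playProb_nonneg hπ Φ x a)]
          exact playProb_le_one hπ Φ x a
        have h2 := inner_sum_bound hL x a astar
        calc |playProb Φ π x a| * |∑ t : Fin n, (L (a t) (x t) - L astar (x t))|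
            ≤ 1 * (n : ℝ) := by
              apply mul_le_mul h1 h2 (abs_nonneg _) zero_le_one
          _ = (n : ℝ) := one_mul _
    _ = (k : ℝ) ^ n * (n : ℝ) := by
        rw [Finset.sum_const, Finset.card_univ, nsmul_eq_mul]
        congr 1
        simp [Fintype.card_fun]
    _ = (n : ℝ) * (k : ℝ) ^ n := mul_comm _ _

lemma abs_regret_le (hk : 1 ≤ k) {L : Fin k → X → ℝ}
    (hL : ∀ a x, L a x ∈ Set.Icc (0:ℝ) 1) (Φ : Fin k → X → S)
    {π : List (Fin k × S) → Fin k → ℝ} (hπ : IsPolicy π) (x : Fin n → X) :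
    |regret L Φ π x| ≤ (n : ℝ) * (k : ℝ) ^ n := by
  haveI : Nonempty (Fin k) := ⟨⟨0, hk⟩⟩
  rw [abs_le]
  constructor
  · calc -((n:ℝ) * (k:ℝ)^n)
        ≤ ∑ a : Fin n → Fin k,
            playProb Φ π x a * ∑ t : Fin n, (L (a t) (x t) - L (Classical.arbitrary _) (x t)) :=
          neg_le_of_abs_le (payoff_abs_bound hL hπ Φ x _)
      _ ≤ regret L Φ π x := by
          apply le_ciSup (f := fun astar => ∑ a : Fin n → Fin k,
            playProb Φ π x a * ∑ t : Fin n, (L (a t) (x t) - L astar (x t)))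
          exact (Set.finite_range _).bddAbove
  · exact ciSup_le fun astar => le_of_abs_le (payoff_abs_bound hL hπ Φ x astar)

lemma regret_mixPol_le (hk : 1 ≤ k) {L : Fin k → X → ℝ} (Φ : Fin k → X → S)
    {π0 π1 : List (Fin k × S) → Fin k → ℝ}
    (h0 : IsPolicy π0) (h1 : IsPolicy π1) {lam : ℝ} (hlam : lam ∈ Set.Icc (0:ℝ) 1)
    (x : Fin n → X) :
    regret L Φ (mixPol hk π0 π1 lam) x ≤
      lam * regret L Φ π0 x + (1 - lam) * regret L Φ π1 x := by
  haveI : Nonempty (Fin k) := ⟨⟨0, hk⟩⟩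
  refine ciSup_le fun astar => ?_
  have hmix : ∀ a : Fin n → Fin k, playProb Φ (mixPol hk π0 π1 lam) x a =
      lam * playProb Φ π0 x a + (1 - lam) * playProb Φ π1 x a :=
    playProb_mixPol hk Φ h0 h1 hlam x
  have : (∑ a : Fin n → Fin k, playProb Φ (mixPol hk π0 π1 lam) x a *
        ∑ t : Fin n, (L (a t) (x t) - L astar (x t))) =
      lam * (∑ a : Fin n → Fin k, playProb Φ π0 x a *
        ∑ t : Fin n, (L (a t) (x t) - L astar (x t))) +
      (1 - lam) * (∑ a : Fin n → Fin k, playProb Φ π1 x a *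
        ∑ t : Fin n, (L (a t) (x t) - L astar (x t))) := by
    rw [Finset.mul_sum, Finset.mul_sum, ← Finset.sum_add_distrib]
    refine Finset.sum_congr rfl fun a _ => ?_
    rw [hmix a]; ring
  rw [this]
  have b0 : (∑ a : Fin n → Fin k, playProb Φ π0 x a *
      ∑ t : Fin n, (L (a t) (x t) - L astar (x t))) ≤ regret L Φ π0 x :=
    le_ciSup (f := fun astar => ∑ a : Fin n → Fin k, playProb Φ π0 x a *
      ∑ t : Fin n, (L (a t) (x t) - L astar (x t))) (Set.finite_range _).bddAbove astar
  have b1 : (∑ a : Fin n → Fin k, playProb Φ π1 x a *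
      ∑ t : Fin n, (L (a t) (x t) - L astar (x t))) ≤ regret L Φ π1 x :=
    le_ciSup (f := fun astar => ∑ a : Fin n → Fin k, playProb Φ π1 x a *
      ∑ t : Fin n, (L (a t) (x t) - L astar (x t))) (Set.finite_range _).bddAbove astar
  have hl : 0 ≤ lam := hlam.1
  have hl' : 0 ≤ 1 - lam := by linarith [hlam.2]
  nlinarith

lemma continuous_regret (hk : 1 ≤ k) (L : Fin k → X → ℝ) (Φ : Fin k → X → S) (x : Fin n → X) :
    Continuous fun π : List (Fin k × S) → Fin k → ℝ => regret L Φ π x := by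
  haveI : Nonempty (Fin k) := ⟨⟨0, hk⟩⟩
  have hrw : (fun π : List (Fin k × S) → Fin k → ℝ => regret L Φ π x) =
      fun π => Finset.univ.sup' Finset.univ_nonempty
        (fun astar => ∑ a : Fin n → Fin k, playProb Φ π x a *
          ∑ t : Fin n, (L (a t) (x t) - L astar (x t))) := by
    funext π
    rw [regret, ← Finset.sup'_univ_eq_ciSup]
  rw [hrw]
  apply Continuous.finset_sup'_apply
  intro astar _
  apply continuous_finset_sum
  intro a _
  apply Continuous.mul _ continuous_const
  apply continuous_finset_prod
  intro t _
  exact (continuous_apply (a t)).comp (continuous_apply (history Φ x a t))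

lemma isCompact_pol : IsCompact {π : List (Fin k × S) → Fin k → ℝ | IsPolicy π} := by
  have : {π : List (Fin k × S) → Fin k → ℝ | IsPolicy π} =
      Set.pi Set.univ (fun _ : List (Fin k × S) => stdSimplex ℝ (Fin k)) := by
    ext π; simp [IsPolicy, Set.mem_pi]
  rw [this]
  exact isCompact_univ_pi fun _ => isCompact_stdSimplex _ _

def unifPol (k : ℕ) (S : Type*) : List (Fin k × S) → Fin k → ℝ := fun _ _ => (k : ℝ)⁻¹

lemma isPolicy_unifPol (hk : 1 ≤ k) : IsPolicy (unifPol k S) := by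
  intro h
  have hknz : (k : ℝ) ≠ 0 := Nat.cast_ne_zero.mpr (by omega)
  constructor
  · intro j; simp only [unifPol]; positivity
  · simp only [unifPol]
    rw [Finset.sum_const, Finset.card_univ, Fintype.card_fin, nsmul_eq_mul,
      mul_inv_cancel₀ hknz]

end More

section Main
variable {k n : ℕ} {X S : Type*}

lemma prior_sum_support {ν : (Fin n → X) →₀ ℝ} (hν : IsPrior ν) :
    ∑ x ∈ ν.support, ν x = 1 := hν.2

lemma abs_bayesRegret_le (hk : 1 ≤ k) {L : Fin k → X → ℝ}
    (hL : ∀ a x, L a x ∈ Set.Icc (0:ℝ) 1) (Φ : Fin k → X → S)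
    {π : List (Fin k × S) → Fin k → ℝ} (hπ : IsPolicy π)
    {ν : (Fin n → X) →₀ ℝ} (hν : IsPrior ν) :
    |bayesRegret L Φ π ν| ≤ (n : ℝ) * (k : ℝ) ^ n := by
  have : bayesRegret L Φ π ν = ∑ x ∈ ν.support, ν x * regret L Φ π x := rfl
  rw [this]
  calc |∑ x ∈ ν.support, ν x * regret L Φ π x|
      ≤ ∑ x ∈ ν.support, |ν x * regret L Φ π x| := Finset.abs_sum_le_sum_abs _ _
    _ ≤ ∑ x ∈ ν.support, ν x * ((n : ℝ) * (k : ℝ) ^ n) := by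
        refine Finset.sum_le_sum fun x _ => ?_
        rw [abs_mul, abs_of_nonneg (hν.1 x)]
        exact mul_le_mul_of_nonneg_left (abs_regret_le hk hL Φ hπ x) (hν.1 x)
    _ = (n : ℝ) * (k : ℝ) ^ n := by
        rw [← Finset.sum_mul, prior_sum_support hν, one_mul]

lemma bddBelow_BR (hk : 1 ≤ k) {L : Fin k → X → ℝ}
    (hL : ∀ a x, L a x ∈ Set.Icc (0:ℝ) 1) (Φ : Fin k → X → S)
    {ν : (Fin n → X) →₀ ℝ} (hν : IsPrior ν) :
    BddBelow (Set.range fun π : {π : List (Fin k × S) → Fin k → ℝ // IsPolicy π} =>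
      bayesRegret L Φ π.1 ν) := by
  refine ⟨-((n : ℝ) * (k : ℝ) ^ n), ?_⟩
  rintro r ⟨π, rfl⟩
  exact neg_le_of_abs_le (abs_bayesRegret_le hk hL Φ π.2 hν)

lemma bddAbove_priorValue (hk : 1 ≤ k) {L : Fin k → X → ℝ}
    (hL : ∀ a x, L a x ∈ Set.Icc (0:ℝ) 1) (Φ : Fin k → X → S) :
    BddAbove (Set.range fun ν : {ν : (Fin n → X) →₀ ℝ // IsPrior ν} =>
      ⨅ π : {π : List (Fin k × S) → Fin k → ℝ // IsPolicy π},
        bayesRegret L Φ π.1 ν.1) := by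
  refine ⟨(n : ℝ) * (k : ℝ) ^ n, ?_⟩
  rintro r ⟨ν, rfl⟩
  refine le_trans (ciInf_le (bddBelow_BR hk hL Φ ν.2) ⟨unifPol k S, isPolicy_unifPol hk⟩) ?_
  exact le_of_abs_le (abs_bayesRegret_le hk hL Φ (isPolicy_unifPol hk) ν.2)

end Main

section Sep
variable {k n : ℕ} {X S : Type*}

lemma exists_policy_le_on_finset (hk : 1 ≤ k) {L : Fin k → X → ℝ}
    (hL : ∀ a x, L a x ∈ Set.Icc (0:ℝ) 1) (Φ : Fin k → X → S)
    (F : Finset (Fin n → X)) :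
    ∃ π : {π : List (Fin k × S) → Fin k → ℝ // IsPolicy π}, ∀ x ∈ F,
      regret L Φ π.1 x ≤
        ⨆ ν : {ν : (Fin n → X) →₀ ℝ // IsPrior ν},
          ⨅ π' : {π' : List (Fin k × S) → Fin k → ℝ // IsPolicy π'},
            bayesRegret L Φ π'.1 ν.1 := by
  classical
  set B : ℝ := (n : ℝ) * (k : ℝ) ^ n with hB
  set V : ℝ := ⨆ ν : {ν : (Fin n → X) →₀ ℝ // IsPrior ν},
      ⨅ π' : {π' : List (Fin k × S) → Fin k → ℝ // IsPolicy π'},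
        bayesRegret L Φ π'.1 ν.1 with hV
  haveI : Nonempty {π : List (Fin k × S) → Fin k → ℝ // IsPolicy π} :=
    ⟨⟨unifPol k S, isPolicy_unifPol hk⟩⟩
  rcases F.eq_empty_or_nonempty with rfl | hF
  · exact ⟨⟨unifPol k S, isPolicy_unifPol hk⟩, by simp⟩
  -- minimize the worst regret over the finite set F
  have hPolne : Set.Nonempty {π : List (Fin k × S) → Fin k → ℝ | IsPolicy π} :=
    ⟨unifPol k S, isPolicy_unifPol hk⟩
  have hcont : Continuous fun π : List (Fin k × S) → Fin k → ℝ =>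
      F.sup' hF fun x => regret L Φ π x :=
    Continuous.finset_sup'_apply hF fun x _ => continuous_regret hk L Φ x
  obtain ⟨πs, hπsPol, hmin⟩ := isCompact_pol.exists_isMinOn hPolne hcont.continuousOn
  set c : ℝ := F.sup' hF fun x => regret L Φ πs x with hc
  refine ⟨⟨πs, hπsPol⟩, fun x hx => le_trans (Finset.le_sup' (fun x => regret L Φ πs x) hx) ?_⟩
  -- it remains to show c ≤ V, by separation
  show c ≤ V
  set s : Set (↥F → ℝ) := {y | ∀ x : ↥F, y x < c} with hs
  set t : Set (↥F → ℝ) := {y | ∃ π, IsPolicy π ∧ ∀ x : ↥F, regret L Φ π x.1 ≤ y x} with ht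
  have hsconv : Convex ℝ s := by
    intro y hy z hz a b ha hb hab
    intro x
    have hyx := hy x
    have hzx := hz x
    show a * y x + b * z x < c
    rcases eq_or_lt_of_le ha with h | h
    · have hb1 : b = 1 := by linarith
      rw [← h, hb1]; linarith
    · have h1 : a * y x < a * c := by exact (mul_lt_mul_iff_right₀ h).mpr hyx
      have h2 : b * z x ≤ b * c := mul_le_mul_of_nonneg_left hzx.le hb
      have h3 : a * c + b * c = c := by rw [← add_mul, hab, one_mul]
      linarith
  have hsopen : IsOpen s := by
    have : s = ⋂ x : ↥F, (fun y : ↥F → ℝ => y x) ⁻¹' Set.Iio c := by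
      ext y; simp [hs, Set.mem_iInter]
    rw [this]
    exact isOpen_iInter_of_finite fun x => (continuous_apply x).isOpen_preimage _ isOpen_Iio
  have htconv : Convex ℝ t := by
    rintro y ⟨πy, hπy, hy⟩ z ⟨πz, hπz, hz⟩ a b ha hb hab
    have hb' : b = 1 - a := by linarith
    have ha1 : a ≤ 1 := by linarith
    refine ⟨mixPol hk πy πz a, isPolicy_mixPol hk hπy hπz ⟨ha, ha1⟩, fun x => ?_⟩
    calc regret L Φ (mixPol hk πy πz a) x.1
        ≤ a * regret L Φ πy x.1 + (1 - a) * regret L Φ πz x.1 :=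
          regret_mixPol_le hk Φ hπy hπz ⟨ha, ha1⟩ x.1
      _ ≤ a * y x + (1 - a) * z x :=
          add_le_add (mul_le_mul_of_nonneg_left (hy x) ha)
            (mul_le_mul_of_nonneg_left (hz x) (by linarith))
      _ = (a • y + b • z) x := by
          simp [hb', Pi.add_apply, Pi.smul_apply, smul_eq_mul]
  have hdisj : Disjoint s t := by
    rw [Set.disjoint_left]
    rintro y hys ⟨π, hπ, hyt⟩
    have h1 : F.sup' hF (fun x => regret L Φ π x) < c := by
      rw [Finset.sup'_lt_iff]
      intro x hx
      exact lt_of_le_of_lt (hyt ⟨x, hx⟩) (hys ⟨x, hx⟩)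
    have h2 : c ≤ F.sup' hF fun x => regret L Φ π x := hmin hπ
    linarith
  obtain ⟨f, u, hfs, hft⟩ := geometric_hahn_banach_open hsconv hsopen htconv hdisj
  set coeff : ↥F → ℝ := fun x0 => f fun x => if x0 = x then 1 else 0 with hcoeff
  have f_eq : ∀ y : ↥F → ℝ, f y = ∑ x : ↥F, y x * coeff x := by
    intro y
    have := LinearMap.pi_apply_eq_sum_univ (f.toLinearMap) y
    simpa [smul_eq_mul] using this
  have coeff_nonneg : ∀ x0 : ↥F, 0 ≤ coeff x0 := by
    intro x0
    by_contra hneg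
    push_neg at hneg
    have key : ∀ T : ℝ, 0 < T →
        f (fun _ => c - 1) - T * coeff x0 < u := by
      intro T hT
      have hmem : (fun x : ↥F => (c - 1) - T * (if x0 = x then 1 else 0)) ∈ s := by
        intro x
        by_cases hxx : x0 = x
        · simp only [if_pos hxx]
          show c - 1 - T * 1 < c
          linarith
        · simp only [if_neg hxx]
          show c - 1 - T * 0 < c
          linarith
      have := hfs _ hmem
      have heq : (fun x : ↥F => (c - 1) - T * (if x0 = x then 1 else 0)) =
          (fun _ : ↥F => c - 1) - T • fun x : ↥F => (if x0 = x then (1:ℝ) else 0) := by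
        funext x; simp [smul_eq_mul]
      rw [heq, map_sub, map_smul, smul_eq_mul] at this
      exact this
    set T0 : ℝ := max 1 ((f (fun _ => c - 1) - u) / coeff x0) with hT0
    have hT0pos : 0 < T0 := lt_of_lt_of_le zero_lt_one (le_max_left _ _)
    have hT0ge : (f (fun _ => c - 1) - u) / coeff x0 ≤ T0 := le_max_right _ _
    have hmul : T0 * coeff x0 ≤ (f (fun _ => c - 1) - u) / coeff x0 * coeff x0 :=
      mul_le_mul_of_nonpos_right hT0ge hneg.le
    rw [div_mul_cancel₀ _ (ne_of_lt hneg)] at hmul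
    have := key T0 hT0pos
    linarith
  set Z : ℝ := ∑ x : ↥F, coeff x with hZ
  have hZnn : 0 ≤ Z := Finset.sum_nonneg fun x _ => coeff_nonneg x
  have hZpos : 0 < Z := by
    rcases eq_or_lt_of_le hZnn with h | h
    · exfalso
      have hall : ∀ x : ↥F, coeff x = 0 := by
        intro x
        have := (Finset.sum_eq_zero_iff_of_nonneg fun x _ => coeff_nonneg x).mp h.symm
        exact this x (Finset.mem_univ x)
      have hzero : ∀ y : ↥F → ℝ, f y = 0 := by
        intro y; rw [f_eq]; simp [hall]
      have hs0 : (fun _ : ↥F => c - 1) ∈ s := fun x => by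
        show c - 1 < c; linarith
      have h1 : (0:ℝ) < u := by
        have := hfs _ hs0; rwa [hzero] at this
      have ht0 : (fun _ : ↥F => B) ∈ t := by
        refine ⟨unifPol k S, isPolicy_unifPol hk, fun x => ?_⟩
        exact le_of_abs_le (abs_regret_le hk hL Φ (isPolicy_unifPol hk) x.1)
      have h2 : u ≤ (0:ℝ) := by
        have := hft _ ht0; rwa [hzero] at this
      linarith
    · exact h
  -- build the prior
  set ν : (Fin n → X) →₀ ℝ := Finsupp.onFinset F
      (fun y => if h : y ∈ F then coeff ⟨y, h⟩ / Z else 0)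
      (fun y hy => by by_contra hyF; exact hy (dif_neg hyF)) with hν
  have hνval : ∀ (y : Fin n → X) (h : y ∈ F), ν y = coeff ⟨y, h⟩ / Z := by
    intro y h
    simp only [hν, Finsupp.onFinset_apply, dif_pos h]
  have hνprior : IsPrior ν := by
    constructor
    · intro y
      simp only [hν, Finsupp.onFinset_apply]
      split
      · exact div_nonneg (coeff_nonneg _) hZnn
      · exact le_refl 0
    · rw [Finsupp.sum_of_support_subset ν Finsupp.support_onFinset_subset _ fun _ _ => rfl]
      rw [← Finset.sum_coe_sort F (ν ·)]
      have : ∀ x : ↥F, ν x.1 = coeff x / Z := fun x => by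
        rw [hνval x.1 x.2]
      rw [Finset.sum_congr rfl fun x _ => this x, ← Finset.sum_div, ← hZ,
        div_self (ne_of_gt hZpos)]
  -- lower bound on the Bayesian regret for every policy
  have hlow : ∀ π : {π : List (Fin k × S) → Fin k → ℝ // IsPolicy π},
      u / Z ≤ bayesRegret L Φ π.1 ν := by
    intro π
    have hBR : bayesRegret L Φ π.1 ν = ∑ x : ↥F, (regret L Φ π.1 x.1) * coeff x / Z := by
      rw [bayesRegret, Finsupp.sum_of_support_subset ν Finsupp.support_onFinset_subset
        (fun y p => p * regret L Φ π.1 y) (fun _ _ => zero_mul _)]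
      rw [← Finset.sum_coe_sort F (fun y => ν y * regret L Φ π.1 y)]
      refine Finset.sum_congr rfl fun x _ => ?_
      rw [hνval x.1 x.2]
      ring
    have hmem : (fun x : ↥F => regret L Φ π.1 x.1) ∈ t := ⟨π.1, π.2, fun x => le_refl _⟩
    have h1 : u ≤ f fun x : ↥F => regret L Φ π.1 x.1 := hft _ hmem
    rw [f_eq] at h1
    rw [hBR, ← Finset.sum_div]
    exact (div_le_div_iff_of_pos_right hZpos).mpr h1
  have hcZ : c * Z ≤ u := by
    by_contra hcon
    push_neg at hcon
    set δ : ℝ := (c * Z - u) / (2 * Z) with hδ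
    have hδpos : 0 < δ := div_pos (by linarith) (by linarith)
    have hmem : (fun _ : ↥F => c - δ) ∈ s := fun x => by show c - δ < c; linarith
    have hlt := hfs _ hmem
    rw [f_eq] at hlt
    have heq : (∑ x : ↥F, (c - δ) * coeff x) = (c - δ) * Z := by rw [← Finset.mul_sum]
    rw [heq] at hlt
    have hδZ : δ * Z = (c * Z - u) / 2 := by
      rw [hδ]
      field_simp
    nlinarith
  have hcle : c ≤ u / Z := (le_div_iff₀ hZpos).mpr hcZ
  have hinf : u / Z ≤ ⨅ π : {π : List (Fin k × S) → Fin k → ℝ // IsPolicy π},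
      bayesRegret L Φ π.1 ν := le_ciInf hlow
  have hVle : (⨅ π : {π : List (Fin k × S) → Fin k → ℝ // IsPolicy π},
      bayesRegret L Φ π.1 ν) ≤ V := by
    rw [hV]
    exact le_ciSup (bddAbove_priorValue hk hL Φ) ⟨ν, hνprior⟩
  linarith
end Sep

section Fin2
variable {k n : ℕ} {X S : Type*}

lemma exists_bayes_optimal (hk : 1 ≤ k) {L : Fin k → X → ℝ}
    (hL : ∀ a x, L a x ∈ Set.Icc (0:ℝ) 1) (Φ : Fin k → X → S)
    (ν : {ν : (Fin n → X) →₀ ℝ // IsPrior ν}) :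
    ∃ π : {π : List (Fin k × S) → Fin k → ℝ // IsPolicy π},
      bayesRegret L Φ π.1 ν.1 =
        ⨅ π' : {π' : List (Fin k × S) → Fin k → ℝ // IsPolicy π'},
          bayesRegret L Φ π'.1 ν.1 := by
  haveI : Nonempty {π : List (Fin k × S) → Fin k → ℝ // IsPolicy π} :=
    ⟨⟨unifPol k S, isPolicy_unifPol hk⟩⟩
  have hcont : Continuous fun π : List (Fin k × S) → Fin k → ℝ => bayesRegret L Φ π ν.1 := by
    have : (fun π : List (Fin k × S) → Fin k → ℝ => bayesRegret L Φ π ν.1) =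
        fun π => ∑ x ∈ ν.1.support, ν.1 x * regret L Φ π x := rfl
    rw [this]
    exact continuous_finset_sum _ fun x _ => continuous_const.mul (continuous_regret hk L Φ x)
  obtain ⟨πs, hπs, hmin⟩ := isCompact_pol.exists_isMinOn
    ⟨unifPol k S, isPolicy_unifPol hk⟩ hcont.continuousOn
  refine ⟨⟨πs, hπs⟩, le_antisymm ?_ ?_⟩
  · exact le_ciInf fun π' => hmin π'.2
  · exact ciInf_le (bddBelow_BR hk hL Φ ν.2) ⟨πs, hπs⟩

lemma bddAbove_range_regret (hk : 1 ≤ k) {L : Fin k → X → ℝ}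
    (hL : ∀ a x, L a x ∈ Set.Icc (0:ℝ) 1) (Φ : Fin k → X → S)
    {π : List (Fin k × S) → Fin k → ℝ} (hπ : IsPolicy π) :
    BddAbove (Set.range (regret (n := n) L Φ π)) := by
  refine ⟨(n : ℝ) * (k : ℝ) ^ n, ?_⟩
  rintro r ⟨x, rfl⟩
  exact le_of_abs_le (abs_regret_le hk hL Φ hπ x)

lemma weak_duality (hk : 1 ≤ k) [Nonempty (Fin n → X)] {L : Fin k → X → ℝ}
    (hL : ∀ a x, L a x ∈ Set.Icc (0:ℝ) 1) (Φ : Fin k → X → S) :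
    (⨆ ν : {ν : (Fin n → X) →₀ ℝ // IsPrior ν},
        ⨅ π : {π : List (Fin k × S) → Fin k → ℝ // IsPolicy π},
          bayesRegret L Φ π.1 ν.1) ≤ minimaxRegret k n L Φ := by
  classical
  haveI : Nonempty {π : List (Fin k × S) → Fin k → ℝ // IsPolicy π} :=
    ⟨⟨unifPol k S, isPolicy_unifPol hk⟩⟩
  haveI : Nonempty {ν : (Fin n → X) →₀ ℝ // IsPrior ν} := by
    refine ⟨⟨Finsupp.single (Classical.arbitrary _) 1, ?_, ?_⟩⟩
    · intro x
      rw [Finsupp.single_apply]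
      split <;> norm_num
    · rw [Finsupp.sum_single_index rfl]
  refine ciSup_le fun ν => le_ciInf fun π => ?_
  refine le_trans (ciInf_le (bddBelow_BR hk hL Φ ν.2) π) ?_
  have hbdd := bddAbove_range_regret (n := n) hk hL Φ π.2
  have : bayesRegret L Φ π.1 ν.1 = ∑ x ∈ ν.1.support, ν.1 x * regret L Φ π.1 x := rfl
  rw [this]
  calc ∑ x ∈ ν.1.support, ν.1 x * regret L Φ π.1 x
      ≤ ∑ x ∈ ν.1.support, ν.1 x * ⨆ x' : Fin n → X, regret L Φ π.1 x' := by
        refine Finset.sum_le_sum fun x _ => ?_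
        exact mul_le_mul_of_nonneg_left (le_ciSup hbdd x) (ν.2.1 x)
    _ = ⨆ x' : Fin n → X, regret L Φ π.1 x' := by
        rw [← Finset.sum_mul, prior_sum_support ν.2, one_mul]

lemma minimax_le_priorValue (hk : 1 ≤ k) [Nonempty (Fin n → X)] {L : Fin k → X → ℝ}
    (hL : ∀ a x, L a x ∈ Set.Icc (0:ℝ) 1) (Φ : Fin k → X → S) :
    minimaxRegret k n L Φ ≤
      ⨆ ν : {ν : (Fin n → X) →₀ ℝ // IsPrior ν},
        ⨅ π : {π : List (Fin k × S) → Fin k → ℝ // IsPolicy π},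
          bayesRegret L Φ π.1 ν.1 := by
  classical
  haveI : Nonempty {π : List (Fin k × S) → Fin k → ℝ // IsPolicy π} :=
    ⟨⟨unifPol k S, isPolicy_unifPol hk⟩⟩
  set B : ℝ := (n : ℝ) * (k : ℝ) ^ n with hB
  set V : ℝ := ⨆ ν : {ν : (Fin n → X) →₀ ℝ // IsPrior ν},
      ⨅ π : {π : List (Fin k × S) → Fin k → ℝ // IsPolicy π},
        bayesRegret L Φ π.1 ν.1 with hV
  set K : Finset (Fin n → X) → Set (List (Fin k × S) → Fin k → ℝ) := fun F =>
    {π | IsPolicy π} ∩ {π | ∀ x ∈ F, regret L Φ π x ≤ V} with hK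
  have hdir : Directed (· ⊇ ·) K := by
    intro F G
    refine ⟨F ∪ G, ?_, ?_⟩
    · rintro π ⟨hπ1, hπ2⟩
      exact ⟨hπ1, fun x hx => hπ2 x (Finset.mem_union_left _ hx)⟩
    · rintro π ⟨hπ1, hπ2⟩
      exact ⟨hπ1, fun x hx => hπ2 x (Finset.mem_union_right _ hx)⟩
  have hne : ∀ F, (K F).Nonempty := by
    intro F
    obtain ⟨π, hπ⟩ := exists_policy_le_on_finset hk hL Φ F
    exact ⟨π.1, π.2, hπ⟩
  have hclosed : ∀ F, IsClosed (K F) := by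
    intro F
    refine IsClosed.inter isCompact_pol.isClosed ?_
    have : {π : List (Fin k × S) → Fin k → ℝ | ∀ x ∈ F, regret L Φ π x ≤ V} =
        ⋂ x ∈ F, {π | regret L Φ π x ≤ V} := by
      ext π; simp
    rw [this]
    exact isClosed_biInter fun x _ =>
      isClosed_le (continuous_regret hk L Φ x) continuous_const
  have hcomp : ∀ F, IsCompact (K F) := fun F =>
    isCompact_pol.inter_right (by
      have : {π : List (Fin k × S) → Fin k → ℝ | ∀ x ∈ F, regret L Φ π x ≤ V} =
          ⋂ x ∈ F, {π | regret L Φ π x ≤ V} := by ext π; simp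
      rw [this]
      exact isClosed_biInter fun x _ =>
        isClosed_le (continuous_regret hk L Φ x) continuous_const)
  obtain ⟨πinf, hπinf⟩ :=
    IsCompact.nonempty_iInter_of_directed_nonempty_isCompact_isClosed K hdir hne hcomp hclosed
  have hπinfPol : IsPolicy πinf := (Set.mem_iInter.mp hπinf ∅).1
  have hbound : ∀ x : Fin n → X, regret L Φ πinf x ≤ V := fun x =>
    (Set.mem_iInter.mp hπinf {x}).2 x (Finset.mem_singleton_self x)
  have hbb : BddBelow (Set.range fun π : {π : List (Fin k × S) → Fin k → ℝ // IsPolicy π} =>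
      ⨆ x : Fin n → X, regret L Φ π.1 x) := by
    refine ⟨-B, ?_⟩
    rintro r ⟨π, rfl⟩
    refine le_trans ?_ (le_ciSup (bddAbove_range_regret hk hL Φ π.2) (Classical.arbitrary _))
    exact neg_le_of_abs_le (abs_regret_le hk hL Φ π.2 _)
  calc minimaxRegret k n L Φ
      ≤ ⨆ x : Fin n → X, regret L Φ πinf x := ciInf_le hbb ⟨πinf, hπinfPol⟩
    _ ≤ V := ciSup_le hbound

end Fin2

/-- **Minimax theorem for finite-action partial monitoring.**  For any finite-action
partial monitoring game and any horizon, the minimax regret equals the worst-case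
Bayesian regret over finitely supported priors, and for each such prior the
Bayesian-optimal regret is attained by some policy. -/
theorem pm_minimax_theorem (k n : ℕ) (hk : 1 ≤ k) (hn : 1 ≤ n) {X S : Type*}
    (L : Fin k → X → ℝ) (hL : ∀ a x, L a x ∈ Set.Icc (0:ℝ) 1) (Φ : Fin k → X → S) :
    (minimaxRegret k n L Φ =
      ⨆ ν : {ν : (Fin n → X) →₀ ℝ // IsPrior ν},
        ⨅ π : {π : List (Fin k × S) → Fin k → ℝ // IsPolicy π},
          bayesRegret L Φ π.1 ν.1) ∧
    (∀ ν : {ν : (Fin n → X) →₀ ℝ // IsPrior ν},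
      ∃ π : {π : List (Fin k × S) → Fin k → ℝ // IsPolicy π},
        bayesRegret L Φ π.1 ν.1 =
          ⨅ π' : {π' : List (Fin k × S) → Fin k → ℝ // IsPolicy π'},
            bayesRegret L Φ π'.1 ν.1) := by
  constructor
  · rcases isEmpty_or_nonempty (Fin n → X) with hemp | hne
    · haveI : Nonempty {π : List (Fin k × S) → Fin k → ℝ // IsPolicy π} :=
        ⟨⟨unifPol k S, isPolicy_unifPol hk⟩⟩
      haveI : IsEmpty {ν : (Fin n → X) →₀ ℝ // IsPrior ν} := by
        constructor
        intro ν
        have h1 : ν.1.support = ∅ := Finset.eq_empty_of_isEmpty _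
        have h2 := ν.2.2
        rw [Finsupp.sum, h1, Finset.sum_empty] at h2
        exact one_ne_zero h2.symm
      have hL1 : minimaxRegret k n L Φ = 0 := by
        have heq : (fun π : {π : List (Fin k × S) → Fin k → ℝ // IsPolicy π} =>
            ⨆ x : Fin n → X, regret L Φ π.1 x) = fun _ => (0:ℝ) := by
          funext π
          rw [iSup_of_empty', Real.sSup_empty]
        rw [minimaxRegret, heq, ciInf_const]
      rw [hL1, iSup_of_empty', Real.sSup_empty]
    · exact le_antisymm (minimax_le_priorValue hk hL Φ) (weak_duality hk hL Φ)
  · exact fun ν => exists_bayes_optimal hk hL Φ ν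


end
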